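/- For any test t and atomic step a, the weak conjunction of the iterated step with the test collapses to the test: a^ω ⋓ t = t. -/
import Mathlib


/-- A Concurrent Refinement Algebra over a complete distributive lattice of
commands, ordered by refinement (`⊓` = nondeterministic choice, `⊥` = abort,
`⊤` = magic), with sequential composition `seq` (identity `nil`),
synchronous parallel `par`, weak conjunction `conj`, a Boolean-style
sub-lattice of atomic steps `Atomic` (with `eps` the environment-step identity
of `par`) and a sub-lattice of tests `Test`. -/
structure CRA (C : Type*) [CompleteDistribLattice C] where
  seq : C → C → C
  par : C → C → C
  conj : C → C → C
  nil : C
  eps : C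
  Atomic : C → Prop
  Test : C → Prop
  seq_assoc : ∀ a b c, seq (seq a b) c = seq a (seq b c)
  seq_nil : ∀ c, seq c nil = c
  nil_seq : ∀ c, seq nil c = c
  seq_mono_left : ∀ d : C, Monotone fun c => seq c d
  seq_mono_right : ∀ c : C, Monotone (seq c)
  top_seq : ∀ c, seq ⊤ c = ⊤
  bot_seq : ∀ c, seq ⊥ c = ⊥
  /-- sequential composition distributes over arbitrary choices on the right -/
  seq_sInf_distrib : ∀ (S : Set C) (d : C), seq (sInf S) d = ⨅ c ∈ S, seq c d
  par_assoc : ∀ a b c, par (par a b) c = par a (par b c)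
  par_comm : ∀ a b, par a b = par b a
  /-- parallel distributes over arbitrary choices -/
  par_sInf_distrib : ∀ (c : C) (S : Set C), par c (sInf S) = ⨅ d ∈ S, par c d
  nil_par_nil : par nil nil = nil
  atomic_par : ∀ a b, Atomic a → Atomic b → Atomic (par a b)
  /-- synchronous interchange law for atomic steps -/
  interchange : ∀ a b c d, Atomic a → Atomic b →
    par (seq a c) (seq b d) = seq (par a b) (par c d)
  par_atomic_seq_nil : ∀ a c, Atomic a → par (seq a c) nil = ⊤
  atomic_eps : Atomic eps
  /-- `eps` is the identity of parallel on atomic steps -/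
  eps_par_atomic : ∀ a, Atomic a → par eps a = a
  conj_assoc : ∀ a b c, conj (conj a b) c = conj a (conj b c)
  conj_comm : ∀ a b, conj a b = conj b a
  conj_idem : ∀ a, conj a a = a
  conj_bot : ∀ c, conj c ⊥ = ⊥
  conj_atomic : ∀ a b, Atomic a → Atomic b → conj a b = a ⊔ b
  conj_test : ∀ t t', Test t → Test t' → conj t t' = t ⊔ t'
  conj_interchange : ∀ a b c d, Atomic a → Atomic b →
    conj (seq a c) (seq b d) = seq (conj a b) (conj c d)
  conj_atomic_seq_nil : ∀ a c, Atomic a → conj (seq a c) nil = ⊤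
  conj_sInf_distrib : ∀ (c : C) (S : Set C), S.Nonempty →
    conj c (sInf S) = ⨅ d ∈ S, conj c d
  atomic_conj : ∀ a b, Atomic a → Atomic b → Atomic (conj a b)
  test_nil : Test nil
  test_nil_le : ∀ t, Test t → nil ≤ t
  test_seq_par_interchange : ∀ t t' c d, Test t → Test t' →
    par (seq t c) (seq t' d) = seq (t ⊔ t') (par c d)
  conj_test_interchange : ∀ t t' c d, Test t → Test t' →
    conj (seq t c) (seq t' d) = seq (t ⊔ t') (conj c d)

namespace CRA

variable {C : Type*} [CompleteDistribLattice C] (A : CRA C)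

/-- possibly infinite iteration `c^ω = μ x. nil ⊓ c;x` -/
def omega (c : C) : C :=
  OrderHom.lfp ⟨fun x => A.nil ⊓ A.seq c x,
    fun _ _ h => inf_le_inf_left _ (A.seq_mono_right c h)⟩

/-- finite iteration `c^* = ν x. nil ⊓ c;x` -/
def star (c : C) : C :=
  OrderHom.gfp ⟨fun x => A.nil ⊓ A.seq c x,
    fun _ _ h => inf_le_inf_left _ (A.seq_mono_right c h)⟩

/-- infinite iteration `c^∞ = c^ω ; ⊤` -/
def inft (c : C) : C := A.seq (A.omega c) ⊤

/-- finite powers: `c^0 = nil`, `c^(i+1) = c ; c^i` -/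
def pow (c : C) : ℕ → C
  | 0 => A.nil
  | n + 1 => A.seq c (pow c n)

end CRA

lemma CRA.conj_inf_distrib {C : Type*} [CompleteDistribLattice C] (A : CRA C)
    (c x y : C) : A.conj c (x ⊓ y) = A.conj c x ⊓ A.conj c y := by
  have h := A.conj_sInf_distrib c {x, y} ⟨x, by simp⟩
  rw [sInf_pair] at h; rw [h, iInf_pair]

lemma CRA.conj_mono_right {C : Type*} [CompleteDistribLattice C] (A : CRA C)
    (c : C) {x y : C} (h : x ≤ y) : A.conj c x ≤ A.conj c y := by
  have := A.conj_inf_distrib c x y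
  rw [inf_eq_left.mpr h] at this
  rw [this]
  exact inf_le_right

lemma CRA.omega_unfold {C : Type*} [CompleteDistribLattice C] (A : CRA C)
    (c : C) : A.omega c = A.nil ⊓ A.seq c (A.omega c) := by
  conv_lhs => rw [CRA.omega, ← OrderHom.map_lfp]
  rfl

theorem omega_conj_test {C : Type*} [CompleteDistribLattice C] (A : CRA C)
    (hnil : ∀ t, A.Test t → A.conj A.nil t = t)
    (habs : ∀ t, A.Test t → t ⊓ A.seq t ⊤ = t)
    (a t : C) (ha : A.Atomic a) (ht : A.Test t) :
    A.conj (A.omega a) t = t := by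
  have htop : A.conj (A.seq a (A.omega a)) t = ⊤ := by
    have h1 : (⊤ : C) ≤ A.conj (A.seq a (A.omega a)) t := by
      calc (⊤ : C) = A.conj (A.seq a (A.omega a)) A.nil :=
            (A.conj_atomic_seq_nil a (A.omega a) ha).symm
        _ ≤ _ := A.conj_mono_right _ (A.test_nil_le t ht)
    exact le_antisymm le_top h1
  calc A.conj (A.omega a) t
      = A.conj t (A.omega a) := A.conj_comm _ _
    _ = A.conj t (A.nil ⊓ A.seq a (A.omega a)) := by rw [← A.omega_unfold]
    _ = A.conj t A.nil ⊓ A.conj t (A.seq a (A.omega a)) := A.conj_inf_distrib ..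
    _ = t ⊓ ⊤ := by rw [A.conj_comm t A.nil, hnil t ht,
        A.conj_comm t (A.seq a (A.omega a)), htop]
    _ = t := inf_top_eq t
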